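/- Let k be a field of characteristic p > 0 and let R = k[u_1,...,u_m]. With notation as above (v'_j and g built from products of blocks of variables shifted by constants a_i, and g the product of the remaining variables), let 𝔪 be the maximal ideal of the point (a_1,...,a_m) where additionally a_i = 0 for l_n < i ≤ m. Then for every q = p^e, the element (v'_1 ⋯ v'_n)^(q−1) · g^(q−1) does not lie in the Frobenius power 𝔪^[q] = (x^q : x ∈ 𝔪). -/

import Mathlib

set_option maxHeartbeats 1000000

open MvPolynomial

section Aux
variable {σ R : Type*} [CommRing R] [DecidableEq σ]

lemma bdd_mul {f g : MvPolynomial σ R} {s t : σ →₀ ℕ}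
    (hf : ∀ d ∈ f.support, d ≤ s) (hg : ∀ d ∈ g.support, d ≤ t) :
    ∀ d ∈ (f * g).support, d ≤ s + t := by
  intro d hd
  obtain ⟨y, hy, z, hz, rfl⟩ := Finset.mem_add.mp (MvPolynomial.support_mul f g hd)
  exact add_le_add (hf y hy) (hg z hz)

lemma coeff_mul_bdd {f g : MvPolynomial σ R} {s t : σ →₀ ℕ}
    (hf : ∀ d ∈ f.support, d ≤ s) (hg : ∀ d ∈ g.support, d ≤ t) :
    coeff (s + t) (f * g) = coeff s f * coeff t g := by
  rw [coeff_mul]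
  apply Finset.sum_eq_single_of_mem (s, t) (Finset.HasAntidiagonal.mem_antidiagonal.mpr rfl)
  intro ab hab hne
  by_contra h
  have h1 : ab.1 ∈ f.support := by
    rw [mem_support_iff]; intro h0; exact h (by rw [h0, zero_mul])
  have h2 : ab.2 ∈ g.support := by
    rw [mem_support_iff]; intro h0; exact h (by rw [h0, mul_zero])
  have e1 := Finsupp.le_def.mp (hf _ h1)
  have e2 := Finsupp.le_def.mp (hg _ h2)
  have hsum : ab.1 + ab.2 = s + t := Finset.HasAntidiagonal.mem_antidiagonal.mp hab
  apply hne
  have hs : ab.1 = s := by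
    ext i
    have h3 := DFunLike.congr_fun hsum i
    simp only [Finsupp.add_apply] at h3
    have := e1 i; have := e2 i; omega
  have ht : ab.2 = t := by
    ext i
    have h3 := DFunLike.congr_fun hsum i
    simp only [Finsupp.add_apply] at h3
    have := e1 i; have := e2 i; omega
  exact Prod.ext hs ht

lemma bdd_coeff_prod {ι : Type*} (T : Finset ι) (f : ι → MvPolynomial σ R) (s : ι → σ →₀ ℕ)
    (h : ∀ i ∈ T, ∀ d ∈ (f i).support, d ≤ s i) :
    (∀ d ∈ (∏ i ∈ T, f i).support, d ≤ ∑ i ∈ T, s i) ∧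
      coeff (∑ i ∈ T, s i) (∏ i ∈ T, f i) = ∏ i ∈ T, coeff (s i) (f i) := by
  classical
  induction T using Finset.induction with
  | empty =>
      refine ⟨?_, by simp⟩
      intro d hd
      simp only [Finset.prod_empty, Finset.sum_empty] at hd ⊢
      have hd0 : d = 0 := by
        by_contra hne
        rw [mem_support_iff, coeff_one] at hd
        simp [Ne.symm hne] at hd
      exact le_of_eq hd0
  | @insert i T hnot ih =>
      have hi := h i (Finset.mem_insert_self i T)
      have hT : ∀ i' ∈ T, ∀ d ∈ (f i').support, d ≤ s i' :=
        fun i' hi' => h i' (Finset.mem_insert_of_mem hi')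
      obtain ⟨ihb, ihc⟩ := ih hT
      rw [Finset.prod_insert hnot, Finset.sum_insert hnot, Finset.prod_insert hnot]
      exact ⟨bdd_mul hi ihb, by rw [coeff_mul_bdd hi ihb, ihc]⟩

lemma bdd_coeff_pow (f : MvPolynomial σ R) (s : σ →₀ ℕ)
    (h : ∀ d ∈ f.support, d ≤ s) (n : ℕ) :
    (∀ d ∈ (f ^ n).support, d ≤ n • s) ∧ coeff (n • s) (f ^ n) = coeff s f ^ n := by
  induction n with
  | zero =>
      refine ⟨?_, by simp⟩
      intro d hd
      simp only [pow_zero, zero_smul] at hd ⊢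
      have hd0 : d = 0 := by
        by_contra hne
        rw [mem_support_iff, coeff_one] at hd
        simp [Ne.symm hne] at hd
      exact le_of_eq hd0
  | succ n ih =>
      obtain ⟨ihb, ihc⟩ := ih
      rw [pow_succ, succ_nsmul]
      exact ⟨bdd_mul ihb h, by rw [coeff_mul_bdd ihb h, ihc, pow_succ]⟩

lemma mem_span_pow_support [Nontrivial R] {q : ℕ} {h : MvPolynomial σ R}
    (hh : h ∈ Ideal.span (Set.range fun i : σ => (X i : MvPolynomial σ R) ^ q)) :
    ∀ d ∈ h.support, ∃ i, q ≤ d i := by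
  refine Submodule.span_induction ?_ ?_ ?_ ?_ hh
  · rintro x ⟨i, rfl⟩ d hd
    rw [support_X_pow] at hd
    refine ⟨i, ?_⟩
    rw [Finset.mem_singleton] at hd
    simp [hd]
  · simp
  · intro x y _ _ hx hy d hd
    rcases Finset.mem_union.mp (MvPolynomial.support_add hd) with h' | h'
    · exact hx d h'
    · exact hy d h'
  · intro r x _ hx d hd
    rw [smul_eq_mul] at hd
    obtain ⟨y, hy, z, hz, rfl⟩ := Finset.mem_add.mp (MvPolynomial.support_mul r x hd)
    obtain ⟨i, hi⟩ := hx z hz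
    exact ⟨i, le_trans hi (by simp)⟩

end Aux


/-- Let `k` be a field of characteristic `p > 0` and `R = k[u_1,…,u_m]`. With
`0 = l_0 < l_1 < … < l_n ≤ m`, constants `a_i ∈ k` with `a_i = 0` for `i` in the last block
(`l_n ≤ i`), `v'_j = ∏_{block j} u_i − ∏_{block j} a_i` and `g = ∏_{last block} u_i`, let
`𝔪` be the maximal ideal of the point `(a_1,…,a_m)`, generated by the `u_i − a_i`. Then for
every `q = p^e`, the element `(v'_1 ⋯ v'_n)^(q−1) · g^(q−1)` does not lie in the Frobenius
power `𝔪^[q]`, the ideal generated by the `q`-th powers `(u_i − a_i)^q` of the generators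
of `𝔪`. (Variables are re-indexed by `Fin m`.) -/
theorem stmt_14 (k : Type) [Field k] (p : ℕ) [Fact p.Prime] [CharP k p]
    (m n : ℕ) (l : Fin (n + 1) → ℕ) (hl0 : l 0 = 0) (hlmono : StrictMono l)
    (hlm : l (Fin.last n) ≤ m) (a : Fin m → k)
    (ha : ∀ i : Fin m, l (Fin.last n) ≤ (i : ℕ) → a i = 0)
    (v : Fin n → MvPolynomial (Fin m) k)
    (hv : ∀ j : Fin n, v j =
      (∏ i ∈ Finset.univ.filter
          (fun i : Fin m => l j.castSucc ≤ (i : ℕ) ∧ (i : ℕ) < l j.succ), X i) -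
        C (∏ i ∈ Finset.univ.filter
          (fun i : Fin m => l j.castSucc ≤ (i : ℕ) ∧ (i : ℕ) < l j.succ), a i))
    (g : MvPolynomial (Fin m) k)
    (hg : g = ∏ i ∈ Finset.univ.filter
        (fun i : Fin m => l (Fin.last n) ≤ (i : ℕ)), X i)
    (e : ℕ) (q : ℕ) (hq : q = p ^ e) :
    (∏ j : Fin n, v j) ^ (q - 1) * g ^ (q - 1) ∉
      Ideal.span (Set.range (fun i : Fin m => (X i - C (a i)) ^ q)) := by
  classical
  intro hmem
  have hq1 : 1 ≤ q := hq ▸ Nat.one_le_pow _ _ (Fact.out : p.Prime).pos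
  set φ : MvPolynomial (Fin m) k →ₐ[k] MvPolynomial (Fin m) k :=
    MvPolynomial.aeval (fun i => X i + C (a i)) with hφ
  -- transport membership through the shift automorphism
  have hmem2 : φ ((∏ j : Fin n, v j) ^ (q - 1) * g ^ (q - 1)) ∈
      Ideal.span (Set.range fun i : Fin m => (X i : MvPolynomial (Fin m) k) ^ q) := by
    have h1 := Ideal.mem_map_of_mem (φ : MvPolynomial (Fin m) k →+* MvPolynomial (Fin m) k) hmem
    rw [Ideal.map_span, ← Set.range_comp] at h1
    convert h1 using 3
    funext i
    simp [hφ, Function.comp, map_pow, map_sub, aeval_X, aeval_C, MvPolynomial.algebraMap_eq]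
    rfl
  -- block Finsets and exponent vectors
  set B : Fin n → Finset (Fin m) := fun j =>
    Finset.univ.filter (fun i : Fin m => l j.castSucc ≤ (i : ℕ) ∧ (i : ℕ) < l j.succ) with hB
  set Bl : Finset (Fin m) :=
    Finset.univ.filter (fun i : Fin m => l (Fin.last n) ≤ (i : ℕ)) with hBl
  set s : Fin n → (Fin m →₀ ℕ) := fun j => ∑ i ∈ B j, Finsupp.single i 1 with hs
  set sl : Fin m →₀ ℕ := ∑ i ∈ Bl, Finsupp.single i 1 with hsl
  have hind : ∀ (T : Finset (Fin m)) (i : Fin m),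
      ((∑ i' ∈ T, Finsupp.single i' (1:ℕ)) i) = if i ∈ T then 1 else 0 := by
    intro T i
    rw [Finsupp.finset_sum_apply]
    by_cases hi : i ∈ T
    · rw [Finset.sum_eq_single_of_mem i hi (fun b _ hb => Finsupp.single_eq_of_ne' hb),
        Finsupp.single_eq_same, if_pos hi]
    · rw [if_neg hi]
      exact Finset.sum_eq_zero fun b hb => Finsupp.single_eq_of_ne (fun h => hi (h ▸ hb))
  -- per-variable bounds and coefficients
  have hXb : ∀ (i : Fin m) (c : k),
      ∀ d ∈ (X i + C c : MvPolynomial (Fin m) k).support, d ≤ Finsupp.single i 1 := by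
    intro i c d hd
    rcases Finset.mem_union.mp (MvPolynomial.support_add hd) with h | h
    · rw [support_X] at h
      exact le_of_eq (Finset.mem_singleton.mp h)
    · have hd0 : d = 0 := by
        by_contra hne
        rw [mem_support_iff, coeff_C, if_neg (fun h0 => hne h0.symm)] at h
        exact h rfl
      simp [hd0]
  have hXc : ∀ (i : Fin m) (c : k),
      coeff (Finsupp.single i 1) (X i + C c : MvPolynomial (Fin m) k) = 1 := by
    intro i c
    rw [coeff_add, coeff_X, if_pos rfl, coeff_C, if_neg, add_zero]
    intro h0
    have := DFunLike.congr_fun h0 i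
    simp at this
  -- the images of the v j under φ
  have hwj : ∀ j : Fin n, φ (v j) =
      (∏ i ∈ B j, (X i + C (a i))) - C (∏ i ∈ B j, a i) := by
    intro j
    rw [hv j, map_sub, map_prod]
    simp [hφ, aeval_X, aeval_C, MvPolynomial.algebraMap_eq, hB]
  have hPj := fun j : Fin n => bdd_coeff_prod (B j) (fun i => X i + C (a i))
    (fun i => Finsupp.single i 1) (fun i _ => hXb i (a i))
  have hsne : ∀ j : Fin n, s j ≠ 0 := by
    intro j h0
    have h1 : l j.castSucc < l j.succ := hlmono (Fin.castSucc_lt_succ (i := j))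
    have h2 : l j.succ ≤ l (Fin.last n) := hlmono.monotone (Fin.le_last _)
    have hm : l j.castSucc < m := lt_of_lt_of_le (lt_of_lt_of_le h1 h2) hlm
    have hi0 : (⟨l j.castSucc, hm⟩ : Fin m) ∈ B j := by
      simp [hB]
      omega
    have h1' : s j ⟨l j.castSucc, hm⟩ = 1 := by
      show (∑ i' ∈ B j, Finsupp.single i' (1:ℕ)) ⟨l j.castSucc, hm⟩ = 1
      rw [hind, if_pos hi0]
    rw [h0] at h1'
    simp at h1'
  have hvb : ∀ j : Fin n, ∀ d ∈ (φ (v j)).support, d ≤ s j := by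
    intro j d hd
    rw [hwj j] at hd
    rcases Finset.mem_union.mp (MvPolynomial.support_sub _ _ _ hd) with h | h
    · exact hs ▸ (hPj j).1 d h
    · have hd0 : d = 0 := by
        by_contra hne
        rw [mem_support_iff, coeff_C, if_neg (fun h0 => hne h0.symm)] at h
        exact h rfl
      simp [hd0]
  have hvc : ∀ j : Fin n, coeff (s j) (φ (v j)) = 1 := by
    intro j
    rw [hwj j, coeff_sub, coeff_C, if_neg (fun h0 => hsne j h0.symm), sub_zero, hs]
    rw [(hPj j).2]
    exact Finset.prod_eq_one fun i _ => hXc i (a i)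
  have hpow := fun j : Fin n => bdd_coeff_pow (φ (v j)) (s j) (hvb j) (q - 1)
  have hprod := bdd_coeff_prod Finset.univ (fun j : Fin n => φ (v j) ^ (q - 1))
    (fun j => (q - 1) • s j) (fun j _ => (hpow j).1)
  -- the g part
  have hgw : φ g = ∏ i ∈ Bl, (X i + C (a i)) := by
    rw [hg, map_prod]
    simp [hφ, aeval_X, hBl]
  have hPl := bdd_coeff_prod Bl (fun i => X i + C (a i))
    (fun i => Finsupp.single i 1) (fun i _ => hXb i (a i))
  have hglb : ∀ d ∈ (φ g).support, d ≤ sl := by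
    intro d hd
    rw [hgw] at hd
    exact hsl ▸ hPl.1 d hd
  have hglc : coeff sl (φ g) = 1 := by
    rw [hgw, hsl, hPl.2]
    exact Finset.prod_eq_one fun i _ => hXc i (a i)
  have hgpow := bdd_coeff_pow (φ g) sl hglb (q - 1)
  -- the key coefficient
  have hco : coeff ((∑ j : Fin n, (q - 1) • s j) + (q - 1) • sl)
      (φ ((∏ j : Fin n, v j) ^ (q - 1) * g ^ (q - 1))) = 1 := by
    rw [map_mul, map_pow, map_prod, map_pow, ← Finset.prod_pow]
    rw [coeff_mul_bdd hprod.1 hgpow.1, hprod.2, hgpow.2, hglc, one_pow, mul_one]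
    refine Finset.prod_eq_one fun j _ => ?_
    rw [(hpow j).2, hvc j, one_pow]
  -- each coordinate of the exponent is < q
  have happ : ∀ i : Fin m,
      ((∑ j : Fin n, (q - 1) • s j) + (q - 1) • sl) i ≤ q - 1 := by
    intro i
    rw [Finsupp.add_apply, Finsupp.finset_sum_apply, Finsupp.smul_apply, smul_eq_mul]
    have hsa : ∀ j : Fin n, s j i = if i ∈ B j then 1 else 0 := fun j => hind (B j) i
    have hsla : sl i = if i ∈ Bl then 1 else 0 := hind Bl i
    simp only [Finsupp.smul_apply, smul_eq_mul, hsa, hsla]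
    rw [← Finset.mul_sum, ← mul_add]
    have hkey : ((∑ j : Fin n, if i ∈ B j then 1 else 0) + (if i ∈ Bl then 1 else 0)) ≤ 1 := by
      by_cases hl : l (Fin.last n) ≤ (i : ℕ)
      · have hnB : ∀ j : Fin n, i ∉ B j := by
          intro j hj
          have h2 : l j.succ ≤ l (Fin.last n) := hlmono.monotone (Fin.le_last _)
          rw [hB] at hj
          simp only [Finset.mem_filter, Finset.mem_univ, true_and] at hj
          omega
        rw [Finset.sum_eq_zero (fun j _ => if_neg (hnB j)), zero_add]
        split <;> omega
      · have hnBl : i ∉ Bl := by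
          rw [hBl]
          simp [hl]
        rw [if_neg hnBl, add_zero]
        by_cases hex : ∃ j, i ∈ B j
        · obtain ⟨j0, hj0⟩ := hex
          rw [Finset.sum_eq_single_of_mem j0 (Finset.mem_univ _) ?_, if_pos hj0]
          intro j _ hne
          rw [if_neg]
          intro hj
          apply hne
          rw [hB] at hj hj0
          simp only [Finset.mem_filter, Finset.mem_univ, true_and] at hj hj0
          by_contra hne'
          rcases lt_or_gt_of_ne hne' with h | h
          · have : l j.succ ≤ l j0.castSucc := hlmono.monotone (by
              rw [Fin.le_def]
              simp only [Fin.val_succ, Fin.coe_castSucc]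
              exact h)
            omega
          · have : l j0.succ ≤ l j.castSucc := hlmono.monotone (by
              rw [Fin.le_def]
              simp only [Fin.val_succ, Fin.coe_castSucc]
              exact h)
            omega
        · rw [Finset.sum_eq_zero (fun j _ => if_neg (fun hj => hex ⟨j, hj⟩))]
          omega
    calc (q - 1) * ((∑ j : Fin n, if i ∈ B j then 1 else 0) + (if i ∈ Bl then 1 else 0))
        ≤ (q - 1) * 1 := Nat.mul_le_mul_left _ hkey
      _ = q - 1 := mul_one _
  -- contradiction
  obtain ⟨i, hi⟩ := mem_span_pow_support hmem2 _
    (mem_support_iff.mpr (by rw [hco]; exact one_ne_zero))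
  have := happ i
  omega
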